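/- Let p be a prime and Γ a finite p-group such that the dimension over F_p of H^1(Γ, F_p) equals the dimension over F_p of H^2(Γ, F_p) (i.e., Γ is balanced). Then the Schur multiplier of Γ is trivial: the group homology H_2(Γ, ℤ), with trivial ℤ coefficients, vanishes. -/

import Mathlib

set_option linter.unusedSectionVars false
set_option synthInstance.maxHeartbeats 1000000
set_option maxHeartbeats 2000000

noncomputable section

/-- The degree-2 differential `∂₂ : ℤ[Γ²] → ℤ[Γ]` of the inhomogeneous bar complex
computing group homology with trivial `ℤ` coefficients:
`∂₂[g|h] = [h] - [gh] + [g]`. -/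
def barD2 (Γ : Type) [Group Γ] : ((Γ × Γ) →₀ ℤ) →ₗ[ℤ] (Γ →₀ ℤ) :=
  Finsupp.lift _ ℤ _ fun gh =>
    Finsupp.single gh.2 1 - Finsupp.single (gh.1 * gh.2) 1 + Finsupp.single gh.1 1

/-- The degree-3 differential `∂₃ : ℤ[Γ³] → ℤ[Γ²]` of the inhomogeneous bar complex
computing group homology with trivial `ℤ` coefficients:
`∂₃[g|h|k] = [h|k] - [gh|k] + [g|hk] - [g|h]`. -/
def barD3 (Γ : Type) [Group Γ] : ((Γ × Γ × Γ) →₀ ℤ) →ₗ[ℤ] ((Γ × Γ) →₀ ℤ) :=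
  Finsupp.lift _ ℤ _ fun t =>
    Finsupp.single (t.2.1, t.2.2) 1 - Finsupp.single (t.1 * t.2.1, t.2.2) 1 +
      Finsupp.single (t.1, t.2.1 * t.2.2) 1 - Finsupp.single (t.1, t.2.1) 1

namespace SchurAux

/-! ## Elementary facts about the bar differentials over `ℤ` -/

variable {Γ : Type} [Group Γ]

lemma barD2_single (g h : Γ) (c : ℤ) :
    barD2 Γ (Finsupp.single (g, h) c) =
      c • (Finsupp.single h 1 - Finsupp.single (g * h) 1 + Finsupp.single g 1) := by
  simp [barD2, Finsupp.lift_apply, Finsupp.sum_single_index]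

lemma barD3_single (g h j : Γ) (c : ℤ) :
    barD3 Γ (Finsupp.single (g, h, j) c) =
      c • (Finsupp.single (h, j) 1 - Finsupp.single (g * h, j) 1 +
        Finsupp.single (g, h * j) 1 - Finsupp.single (g, h) 1) := by
  simp [barD3, Finsupp.lift_apply, Finsupp.sum_single_index]

lemma barD2_comp_barD3 : (barD2 Γ).comp (barD3 Γ) = 0 := by
  apply Finsupp.lhom_ext
  rintro ⟨g, h, j⟩ c
  simp only [LinearMap.comp_apply, barD3_single, map_smul, map_sub, map_add, barD2_single,
    one_smul, LinearMap.zero_apply, mul_assoc]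
  rw [smul_eq_zero]
  right
  abel

lemma range_barD3_le_ker_barD2 : LinearMap.range (barD3 Γ) ≤ LinearMap.ker (barD2 Γ) := by
  rintro _ ⟨v, rfl⟩
  rw [LinearMap.mem_ker, ← LinearMap.comp_apply, barD2_comp_barD3, LinearMap.zero_apply]

section FintypeGamma

variable [Fintype Γ]

/-- Homotopy `s : C₂ → C₃`, `s[g|h] = ∑ₓ [g|h|x]`. -/
def barS (Γ : Type) [Group Γ] [Fintype Γ] : ((Γ × Γ) →₀ ℤ) →ₗ[ℤ] ((Γ × Γ × Γ) →₀ ℤ) :=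
  Finsupp.lift _ ℤ _ fun gh => ∑ x : Γ, Finsupp.single (gh.1, gh.2, x) 1

/-- `u : C₁ → C₂`, `u[g] = ∑ₓ [g|x]`. -/
def barU (Γ : Type) [Group Γ] [Fintype Γ] : (Γ →₀ ℤ) →ₗ[ℤ] ((Γ × Γ) →₀ ℤ) :=
  Finsupp.lift _ ℤ _ fun g => ∑ x : Γ, Finsupp.single (g, x) 1

lemma barS_single (g h : Γ) (c : ℤ) :
    barS Γ (Finsupp.single (g, h) c) = c • ∑ x : Γ, Finsupp.single (g, h, x) 1 := by
  simp [barS, Finsupp.lift_apply, Finsupp.sum_single_index]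

lemma barU_single (g : Γ) (c : ℤ) :
    barU Γ (Finsupp.single g c) = c • ∑ x : Γ, Finsupp.single (g, x) 1 := by
  simp [barU, Finsupp.lift_apply, Finsupp.sum_single_index]

lemma homotopy_identity :
    (barD3 Γ).comp (barS Γ) =
      (barU Γ).comp (barD2 Γ) - (Fintype.card Γ : ℤ) • LinearMap.id := by
  apply Finsupp.lhom_ext
  rintro ⟨g, h⟩ c
  have key : ∑ x : Γ, Finsupp.single (g, h * x) (1:ℤ) = ∑ x : Γ, Finsupp.single (g, x) 1 :=
    Fintype.sum_equiv (Equiv.mulLeft h) _ _ (fun x => rfl)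
  simp only [LinearMap.comp_apply, barS_single, map_smul, map_sum, barD3_single, one_smul,
    LinearMap.sub_apply, LinearMap.smul_apply, LinearMap.id_apply]
  rw [Finset.sum_sub_distrib, Finset.sum_add_distrib, Finset.sum_sub_distrib, key,
    Finset.sum_const, Finset.card_univ]
  have hD : barD2 Γ (Finsupp.single (g, h) c) =
      c • (Finsupp.single h 1 - Finsupp.single (g * h) 1 + Finsupp.single g 1) :=
    barD2_single g h c
  rw [hD, map_smul]
  have h2 : (Finsupp.single (g, h) c) = c • Finsupp.single (g, h) (1:ℤ) := by simp
  rw [h2, smul_comm ((Fintype.card Γ : ℤ)) c, ← smul_sub]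
  congr 1
  simp only [map_sub, map_add, barU_single, one_smul, Nat.cast_smul_eq_nsmul]

lemma card_smul_mem_range_barD3 {c : ((Γ × Γ) →₀ ℤ)} (hc : c ∈ LinearMap.ker (barD2 Γ)) :
    (Fintype.card Γ : ℤ) • c ∈ LinearMap.range (barD3 Γ) := by
  refine ⟨-(barS Γ c), ?_⟩
  have h2 : barD3 Γ (barS Γ c) = barU Γ (barD2 Γ c) - (Fintype.card Γ : ℤ) • c := by
    have := LinearMap.ext_iff.mp (homotopy_identity (Γ := Γ)) c
    simpa using this
  rw [LinearMap.mem_ker.mp hc, map_zero, zero_sub] at h2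
  rw [map_neg, h2, neg_neg]

lemma card_smul_mem_range_barD2 (v : Γ →₀ ℤ) :
    (Fintype.card Γ : ℤ) • v ∈ LinearMap.range (barD2 Γ) := by
  induction v using Finsupp.induction_linear with
  | zero => simp
  | add f g hf hg => rw [smul_add]; exact Submodule.add_mem _ hf hg
  | single g c =>
      have key : barD2 Γ (∑ j ∈ Finset.range (Fintype.card Γ), Finsupp.single (g ^ j, g) 1) =
          (Fintype.card Γ : ℤ) • Finsupp.single g 1 := by
        rw [map_sum]
        have hterm : ∀ j, barD2 Γ (Finsupp.single (g ^ j, g) (1:ℤ)) =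
            Finsupp.single g 1 + (Finsupp.single (g ^ j) 1 - Finsupp.single (g ^ (j + 1)) 1) := by
          intro j
          rw [barD2_single, one_smul, pow_succ]
          abel
        simp only [hterm]
        rw [Finset.sum_add_distrib, Finset.sum_const, Finset.card_range, Finset.sum_range_sub',
          pow_zero, pow_card_eq_one, sub_self, add_zero, Nat.cast_smul_eq_nsmul]
      refine ⟨c • ∑ j ∈ Finset.range (Fintype.card Γ), Finsupp.single (g ^ j, g) 1, ?_⟩
      rw [map_smul, key, smul_comm]
      congr 1
      simp

/-! ## The rank of `ker ∂₂` over `ℤ` -/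

lemma rank_range_barD2 :
    Module.rank ℤ (LinearMap.range (barD2 Γ)) = (Fintype.card Γ : Cardinal) := by
  apply le_antisymm
  · calc Module.rank ℤ (LinearMap.range (barD2 Γ)) ≤ Module.rank ℤ (Γ →₀ ℤ) :=
          Submodule.rank_le _
      _ = (Fintype.card Γ : Cardinal) := by rw [rank_finsupp_self', Cardinal.mk_fintype]
  · set f : (Γ →₀ ℤ) →ₗ[ℤ] (Γ →₀ ℤ) := (Fintype.card Γ : ℤ) • LinearMap.id with hf
    have hinj : Function.Injective f := by
      intro v w hvw
      have hc : (Fintype.card Γ : ℤ) ≠ 0 := by exact_mod_cast Fintype.card_ne_zero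
      exact smul_right_injective _ hc hvw
    have hle : LinearMap.range f ≤ LinearMap.range (barD2 Γ) := by
      rintro _ ⟨v, rfl⟩
      exact card_smul_mem_range_barD2 v
    calc (Fintype.card Γ : Cardinal) = Module.rank ℤ (Γ →₀ ℤ) := by
          rw [rank_finsupp_self', Cardinal.mk_fintype]
      _ = Module.rank ℤ (LinearMap.range f) := (LinearEquiv.ofInjective f hinj).rank_eq
      _ ≤ Module.rank ℤ (LinearMap.range (barD2 Γ)) := Submodule.rank_mono hle

lemma exists_fin_basis_ker :
    ∃ (r : ℕ) (_ : Module.Basis (Fin r) ℤ (LinearMap.ker (barD2 Γ))),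
      r + Fintype.card Γ = Fintype.card Γ * Fintype.card Γ := by
  obtain ⟨r, bK⟩ := Submodule.basisOfPid
    (Finsupp.basisSingleOne : Module.Basis (Γ × Γ) ℤ ((Γ × Γ) →₀ ℤ)) (LinearMap.ker (barD2 Γ))
  refine ⟨r, bK, ?_⟩
  have h1 := LinearMap.rank_range_add_rank_ker (barD2 Γ)
  rw [rank_range_barD2, rank_eq_card_basis bK, rank_finsupp_self', Cardinal.mk_fintype] at h1
  simp only [Fintype.card_fin, Fintype.card_prod] at h1
  have h2 : Fintype.card Γ + r = Fintype.card Γ * Fintype.card Γ := by exact_mod_cast h1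
  omega

end FintypeGamma

/-! ## Reduction mod `p` -/

/-- Reduction mod `p` of integral finsupps. -/
def redMap (p : ℕ) (X : Type) : (X →₀ ℤ) →ₗ[ℤ] (X →₀ ZMod p) :=
  Finsupp.mapRange.linearMap (Int.castAddHom (ZMod p)).toIntLinearMap

@[simp] lemma redMap_single (p : ℕ) {X : Type} (x : X) (c : ℤ) :
    redMap p X (Finsupp.single x c) = Finsupp.single x (c : ZMod p) := by
  simp [redMap]

lemma redMap_surjective (p : ℕ) (X : Type) : Function.Surjective (redMap p X) :=
  Finsupp.mapRange_surjective _ (by simp) (ZMod.intCast_surjective)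

lemma exists_of_redMap_eq_zero {p : ℕ} {X : Type} {x : X →₀ ℤ} (h : redMap p X x = 0) :
    ∃ z : X →₀ ℤ, x = (p : ℤ) • z := by
  refine ⟨x.mapRange (fun t => t / p) (by simp), ?_⟩
  ext a
  have ha : ((x a : ℤ) : ZMod p) = 0 := by
    have := DFunLike.congr_fun h a
    simpa [redMap] using this
  have hdvd : (p : ℤ) ∣ x a := (ZMod.intCast_zmod_eq_zero_iff_dvd _ _).mp ha
  simp only [Finsupp.smul_apply, Finsupp.mapRange_apply, smul_eq_mul]
  exact (Int.mul_ediv_cancel' hdvd).symm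

/-- mod-p analogue of `barD3`. -/
def barD3k (p : ℕ) (Γ : Type) [Group Γ] :
    ((Γ × Γ × Γ) →₀ ZMod p) →ₗ[ZMod p] ((Γ × Γ) →₀ ZMod p) :=
  Finsupp.lift _ (ZMod p) _ fun t =>
    Finsupp.single (t.2.1, t.2.2) 1 - Finsupp.single (t.1 * t.2.1, t.2.2) 1 +
      Finsupp.single (t.1, t.2.1 * t.2.2) 1 - Finsupp.single (t.1, t.2.1) 1

lemma barD3k_single (p : ℕ) (g h j : Γ) (c : ZMod p) :
    barD3k p Γ (Finsupp.single (g, h, j) c) =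
      c • (Finsupp.single (h, j) 1 - Finsupp.single (g * h, j) 1 +
        Finsupp.single (g, h * j) 1 - Finsupp.single (g, h) 1) := by
  simp [barD3k, Finsupp.lift_apply, Finsupp.sum_single_index]

lemma redMap_barD3 (p : ℕ) (v : (Γ × Γ × Γ) →₀ ℤ) :
    redMap p _ (barD3 Γ v) = barD3k p Γ (redMap p _ v) := by
  induction v using Finsupp.induction_linear with
  | zero => simp
  | add f g hf hg => simp only [map_add, hf, hg]
  | single t c =>
      obtain ⟨g, h, j⟩ := t
      rw [barD3_single, map_smul, redMap_single, barD3k_single,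
        ← Int.cast_smul_eq_zsmul (ZMod p)]
      simp

section Pmod

variable (p : ℕ) [Fact p.Prime] (Γ : Type) [Group Γ] [Fintype Γ]

/-- the reduction of `ker ∂₂` mod `p`, as a `ZMod p`-submodule. -/
def Pk : Submodule (ZMod p) ((Γ × Γ) →₀ ZMod p) :=
  AddSubgroup.toZModSubmodule p
    ((LinearMap.ker (barD2 Γ)).map (redMap p (Γ × Γ))).toAddSubgroup

lemma mem_Pk (x : (Γ × Γ) →₀ ZMod p) :
    x ∈ Pk p Γ ↔ ∃ y ∈ LinearMap.ker (barD2 Γ), redMap p _ y = x := by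
  rw [Pk, AddSubgroup.mem_toZModSubmodule, Submodule.mem_toAddSubgroup, Submodule.mem_map]

lemma finrank_Pk {r : ℕ} (bK : Module.Basis (Fin r) ℤ (LinearMap.ker (barD2 Γ))) :
    Module.finrank (ZMod p) (Pk p Γ) = r := by
  classical
  set v : Fin r → ((Γ × Γ) →₀ ZMod p) := fun i => redMap p _ (bK i : (Γ × Γ) →₀ ℤ) with hv
  have hspan : Pk p Γ = Submodule.span (ZMod p) (Set.range v) := by
    apply le_antisymm
    · intro x hx
      obtain ⟨y, hy, rfl⟩ := (mem_Pk p Γ x).mp hx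
      have hrepr : (⟨y, hy⟩ : LinearMap.ker (barD2 Γ)) =
          ∑ i, bK.repr ⟨y, hy⟩ i • bK i := (Module.Basis.sum_repr bK ⟨y, hy⟩).symm
      have hy2 : y = ∑ i, bK.repr ⟨y, hy⟩ i • (bK i : (Γ × Γ) →₀ ℤ) := by
        have := congrArg (Subtype.val) hrepr
        simpa [-Module.Basis.sum_repr] using this
      rw [hy2, map_sum]
      apply Submodule.sum_mem
      intro i _
      rw [map_smul]
      have hcs : (bK.repr ⟨y, hy⟩ i : ℤ) • v i =
          ((bK.repr ⟨y, hy⟩ i : ℤ) : ZMod p) • v i := (Int.cast_smul_eq_zsmul _ _ _).symm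
      rw [hcs]
      exact Submodule.smul_mem _ _ (Submodule.subset_span ⟨i, rfl⟩)
    · rw [Submodule.span_le]
      rintro _ ⟨i, rfl⟩
      exact (mem_Pk p Γ _).mpr ⟨bK i, (bK i).2, rfl⟩
  have hindep : LinearIndependent (ZMod p) v := by
    rw [Fintype.linearIndependent_iff]
    intro g hg
    set m : Fin r → ℤ := fun i => ((g i).val : ℤ) with hm
    have hgm : ∀ i, ((m i : ℤ) : ZMod p) = g i := fun i => by
      simp [hm, ZMod.natCast_val, ZMod.intCast_cast]
    set w : LinearMap.ker (barD2 Γ) := ∑ i, m i • bK i with hw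
    have hred : redMap p _ (w : (Γ × Γ) →₀ ℤ) = 0 := by
      have hcoe : (w : (Γ × Γ) →₀ ℤ) = ∑ i, m i • (bK i : (Γ × Γ) →₀ ℤ) := by
        simp [hw]
      rw [hcoe, map_sum]
      simp only [map_smul]
      have hsm : ∀ i, (m i) • v i = g i • v i := fun i => by
        rw [← hgm i, Int.cast_smul_eq_zsmul]
      calc ∑ i, m i • v i = ∑ i, g i • v i := Finset.sum_congr rfl fun i _ => hsm i
        _ = 0 := hg
    obtain ⟨z, hz⟩ := exists_of_redMap_eq_zero hred
    have hzker : z ∈ LinearMap.ker (barD2 Γ) := by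
      rw [LinearMap.mem_ker]
      have h0 : (p : ℤ) • barD2 Γ z = 0 := by
        rw [← map_smul, ← hz]
        exact w.2
      have hp : (p : ℤ) ≠ 0 := by exact_mod_cast (Fact.out : p.Prime).ne_zero
      exact smul_right_injective _ hp (by simpa using h0)
    have hwz : w = (p : ℤ) • (⟨z, hzker⟩ : LinearMap.ker (barD2 Γ)) := by
      apply Subtype.ext
      simpa using hz
    intro i
    have hrepr : m i = (p : ℤ) * bK.repr ⟨z, hzker⟩ i := by
      have h1 := congrArg (fun t => bK.repr t i) hwz
      simp only [map_smul, Finsupp.smul_apply, smul_eq_mul] at h1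
      have h2 : bK.repr w i = m i := by
        rw [hw]
        simp [Finsupp.single_apply]
      rw [h2] at h1
      exact h1
    rw [← hgm i, hrepr]
    simp [ZMod.intCast_zmod_eq_zero_iff_dvd]
  rw [hspan, finrank_span_eq_card hindep, Fintype.card_fin]

end Pmod

/-! ## Group cohomology computations -/

open groupCohomology

/-- The trivial representation of `Γ` on `ZMod p`. -/
abbrev Atriv (p : ℕ) (Γ : Type) [Group Γ] : Rep (ZMod p) Γ := Rep.trivial (ZMod p) Γ (ZMod p)

section Coh

variable (p : ℕ) [Fact p.Prime] (Γ : Type) [Group Γ] [Fintype Γ]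

instance : Module.Finite (ZMod p) (Atriv p Γ) :=
  inferInstanceAs (Module.Finite (ZMod p) (ZMod p))

lemma finrank_coh1_eq : Module.finrank (ZMod p) (groupCohomology (Atriv p Γ) 1) =
    Module.finrank (ZMod p) (LinearMap.ker (d₁₂ (Atriv p Γ)).hom) := by
  have e2 : (shortComplexH1 (Atriv p Γ)).moduleCatLeftHomologyData.H ≃ₗ[ZMod p]
      LinearMap.ker (d₁₂ (Atriv p Γ)).hom :=
    Submodule.quotEquivOfEqBot _ (by
      rw [LinearMap.range_eq_bot]
      ext x
      change (d₀₁ (Atriv p Γ)).hom 1 = 0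
      rw [d₀₁_eq_zero]
      rfl)
  have e : (groupCohomology (Atriv p Γ) 1 : Type) ≃ₗ[ZMod p]
      (LinearMap.ker (d₁₂ (Atriv p Γ)).hom : Type _) :=
    (groupCohomology.H1Iso (Atriv p Γ)).toLinearEquiv.trans e2
  exact e.finrank_eq

lemma finrank_coh2_eq : Module.finrank (ZMod p) (groupCohomology (Atriv p Γ) 2) +
      Module.finrank (ZMod p) (LinearMap.range (d₁₂ (Atriv p Γ)).hom) =
    Module.finrank (ZMod p) (LinearMap.ker (d₂₃ (Atriv p Γ)).hom) := by
  have hle : LinearMap.range (d₁₂ (Atriv p Γ)).hom ≤ LinearMap.ker (d₂₃ (Atriv p Γ)).hom :=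
    LinearMap.range_le_ker_iff.2 (congrArg ModuleCat.Hom.hom (d₁₂_comp_d₂₃ _))
  have e2 : (LinearMap.range (shortComplexH2 (Atriv p Γ)).moduleCatToCycles :
        Submodule (ZMod p) (LinearMap.ker (d₂₃ (Atriv p Γ)).hom)) ≃ₗ[ZMod p]
      LinearMap.range (d₁₂ (Atriv p Γ)).hom := by
    refine (Submodule.equivMapOfInjective _ (Submodule.injective_subtype _) _).trans
      (LinearEquiv.ofEq _ _ ?_)
    ext y
    constructor
    · rintro ⟨_, ⟨x, rfl⟩, rfl⟩
      exact ⟨x, rfl⟩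
    · rintro ⟨x, rfl⟩
      exact ⟨_, ⟨x, rfl⟩, rfl⟩
  have e1 : (groupCohomology (Atriv p Γ) 2 : Type) ≃ₗ[ZMod p]
      (shortComplexH2 (Atriv p Γ)).moduleCatLeftHomologyData.H :=
    (groupCohomology.H2Iso (Atriv p Γ)).toLinearEquiv
  rw [e1.finrank_eq, ← e2.finrank_eq]
  haveI : Module.Finite (ZMod p) (shortComplexH2 (Atriv p Γ)).X₂ :=
    inferInstanceAs (Module.Finite (ZMod p) (Γ × Γ → ZMod p))
  haveI : Module.Finite (ZMod p) (LinearMap.ker (shortComplexH2 (Atriv p Γ)).g.hom) :=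
    Module.Finite.of_injective (Submodule.subtype _) (Submodule.injective_subtype _)
  exact Submodule.finrank_quotient_add_finrank _

lemma finrank_ker_dTwo_eq_card
    (hbal : Module.finrank (ZMod p) (groupCohomology (Atriv p Γ) 1) =
      Module.finrank (ZMod p) (groupCohomology (Atriv p Γ) 2)) :
    Module.finrank (ZMod p) (LinearMap.ker (d₂₃ (Atriv p Γ)).hom) = Fintype.card Γ := by
  have h1 := finrank_coh1_eq p Γ
  have h2 := finrank_coh2_eq p Γ
  have h3 := LinearMap.finrank_range_add_finrank_ker (d₁₂ (Atriv p Γ)).hom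
  have h4 : Module.finrank (ZMod p) (ModuleCat.of (ZMod p) (Γ → Atriv p Γ)) = Fintype.card Γ :=
    Module.finrank_fintype_fun_eq_card _
  omega

lemma finrank_range_dTwo_add :
    Module.finrank (ZMod p) (LinearMap.range (d₂₃ (Atriv p Γ)).hom) +
      Module.finrank (ZMod p) (LinearMap.ker (d₂₃ (Atriv p Γ)).hom) =
        Fintype.card Γ * Fintype.card Γ := by
  have h3 := LinearMap.finrank_range_add_finrank_ker (d₂₃ (Atriv p Γ)).hom
  have h4 : Module.finrank (ZMod p) (ModuleCat.of (ZMod p) (Γ × Γ → Atriv p Γ)) =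
      Fintype.card (Γ × Γ) :=
    Module.finrank_fintype_fun_eq_card _
  rw [Fintype.card_prod] at h4
  omega

lemma finrank_range_barD3k_eq :
    Module.finrank (ZMod p) (LinearMap.range (barD3k p Γ)) =
      Module.finrank (ZMod p) (LinearMap.range (d₂₃ (Atriv p Γ)).hom) := by
  classical
  set k := ZMod p
  set E2 : ((Γ × Γ) → k) ≃ₗ[k] (((Γ × Γ) →₀ k) →ₗ[k] k) := Finsupp.llift k k k (Γ × Γ)
  set E3 : ((Γ × Γ × Γ) → k) ≃ₗ[k] (((Γ × Γ × Γ) →₀ k) →ₗ[k] k) :=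
    Finsupp.llift k k k (Γ × Γ × Γ)
  have key : (barD3k p Γ).dualMap.comp (E2 : ((Γ × Γ) → k) →ₗ[k] _) =
      (E3 : ((Γ × Γ × Γ) → k) →ₗ[k] _).comp (d₂₃ (Atriv p Γ)).hom := by
    apply LinearMap.ext
    intro f
    apply Finsupp.lhom_ext
    rintro ⟨g, h, j⟩ c
    simp only [LinearMap.comp_apply, LinearMap.dualMap_apply, LinearEquiv.coe_coe]
    rw [barD3k_single]
    simp only [map_smul, map_sub, map_add]
    have hE2 : ∀ (x : Γ × Γ), E2 f (Finsupp.single x 1) = f x := by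
      intro x
      simp [E2, Finsupp.llift_apply, Finsupp.lift_apply, Finsupp.sum_single_index]
    have hE3 : E3 ((d₂₃ (Atriv p Γ)).hom f) (Finsupp.single (g, h, j) c) =
        c • ((d₂₃ (Atriv p Γ)).hom f (g, h, j)) := by
      simp [E3, Finsupp.llift_apply, Finsupp.lift_apply, Finsupp.sum_single_index]
    rw [hE2, hE2, hE2, hE2]
    refine Eq.trans ?_ hE3.symm
    rw [d₂₃_hom_apply]
    simp [smul_sub, smul_add]
  have h1 : LinearMap.range ((barD3k p Γ).dualMap.comp (E2 : ((Γ × Γ) → k) →ₗ[k] _)) =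
      LinearMap.range (barD3k p Γ).dualMap := LinearMap.range_comp_of_range_eq_top _ E2.range
  have h5 : Module.finrank k (LinearMap.range (barD3k p Γ).dualMap) =
      Module.finrank k (LinearMap.range (d₂₃ (Atriv p Γ)).hom) := by
    rw [← h1, key, LinearMap.range_comp]
    exact LinearEquiv.finrank_map_eq E3 _
  rw [← LinearMap.finrank_range_dualMap_eq_finrank_range (barD3k p Γ), h5]

/-! ## Putting everything together -/

lemma range_barD3k_le_Pk : LinearMap.range (barD3k p Γ) ≤ Pk p Γ := by
  rintro _ ⟨y, rfl⟩
  obtain ⟨y', rfl⟩ := redMap_surjective p _ y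
  rw [← redMap_barD3]
  exact (mem_Pk p Γ _).mpr ⟨barD3 Γ y', range_barD3_le_ker_barD2 ⟨y', rfl⟩, rfl⟩

lemma Pk_eq_range_barD3k
    (hbal : Module.finrank (ZMod p) (groupCohomology (Atriv p Γ) 1) =
      Module.finrank (ZMod p) (groupCohomology (Atriv p Γ) 2)) :
    Pk p Γ = LinearMap.range (barD3k p Γ) := by
  obtain ⟨r, bK, hr⟩ := exists_fin_basis_ker (Γ := Γ)
  have h1 := finrank_Pk p Γ bK
  have h2 := finrank_range_barD3k_eq p Γ
  have h3 := finrank_range_dTwo_add p Γ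
  have h4 := finrank_ker_dTwo_eq_card p Γ hbal
  have hle := range_barD3k_le_Pk p Γ
  have heq : Module.finrank (ZMod p) (Pk p Γ) ≤
      Module.finrank (ZMod p) (LinearMap.range (barD3k p Γ)) := by omega
  exact (Submodule.eq_of_le_of_finrank_le hle heq).symm

lemma ker_le_aux
    (hbal : Module.finrank (ZMod p) (groupCohomology (Atriv p Γ) 1) =
      Module.finrank (ZMod p) (groupCohomology (Atriv p Γ) 2)) :
    ∀ (j : ℕ) (x : (Γ × Γ) →₀ ℤ), x ∈ LinearMap.ker (barD2 Γ) →
      ∃ y ∈ LinearMap.range (barD3 Γ), ∃ z ∈ LinearMap.ker (barD2 Γ),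
        x = y + ((p : ℤ) ^ j) • z := by
  intro j
  induction j with
  | zero => intro x hx; exact ⟨0, Submodule.zero_mem _, x, hx, by simp⟩
  | succ j ih =>
      intro x hx
      obtain ⟨y, hy, z, hz, hxyz⟩ := ih x hx
      -- reduce z mod p and use Pk = range barD3k
      have hzP : redMap p _ z ∈ Pk p Γ := (mem_Pk p Γ _).mpr ⟨z, hz, rfl⟩
      rw [Pk_eq_range_barD3k p Γ hbal] at hzP
      obtain ⟨w, hw⟩ := hzP
      obtain ⟨w', rfl⟩ := redMap_surjective p _ w
      rw [← redMap_barD3] at hw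
      have hred0 : redMap p _ (z - barD3 Γ w') = 0 := by
        rw [map_sub, hw, sub_self]
      obtain ⟨z₂, hz₂⟩ := exists_of_redMap_eq_zero hred0
      have hz₂ker : z₂ ∈ LinearMap.ker (barD2 Γ) := by
        rw [LinearMap.mem_ker]
        have h0 : (p : ℤ) • barD2 Γ z₂ = 0 := by
          rw [← map_smul, ← hz₂, map_sub, LinearMap.mem_ker.mp hz,
            LinearMap.mem_ker.mp (range_barD3_le_ker_barD2 ⟨w', rfl⟩), sub_self]
        have hp : (p : ℤ) ≠ 0 := by exact_mod_cast (Fact.out : p.Prime).ne_zero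
        exact smul_right_injective _ hp (by simpa using h0)
      refine ⟨y + ((p:ℤ)^j) • barD3 Γ w', ?_, z₂, hz₂ker, ?_⟩
      · exact Submodule.add_mem _ hy (Submodule.smul_mem _ _ ⟨w', rfl⟩)
      · have hzz : z = barD3 Γ w' + (p:ℤ) • z₂ := by
          rw [← hz₂]; abel
        rw [hxyz, hzz]
        rw [smul_add, ← add_assoc, smul_smul, pow_succ]

end Coh

end SchurAux

open SchurAux in
/-- for a prime `p` and a balanced finite `p`-group `Γ` (i.e. one with
`dim_{F_p} H¹(Γ, F_p) = dim_{F_p} H²(Γ, F_p)`), the Schur multiplier `H₂(Γ, ℤ)` (the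
second group homology with trivial `ℤ` coefficients, here computed as the homology
`ker ∂₂ / im ∂₃` of the bar complex) is trivial. -/
theorem schur_multiplier_trivial_of_balanced (p : ℕ) [Fact p.Prime]
    (Γ : Type) [Group Γ] [Finite Γ] (hΓ : IsPGroup p Γ)
    (hbal : Module.finrank (ZMod p) (groupCohomology (Rep.trivial (ZMod p) Γ (ZMod p)) 1) =
      Module.finrank (ZMod p) (groupCohomology (Rep.trivial (ZMod p) Γ (ZMod p)) 2)) :
    LinearMap.ker (barD2 Γ) = LinearMap.range (barD3 Γ) := by
  classical
  have : Fintype Γ := Fintype.ofFinite Γ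
  obtain ⟨n, hn⟩ := (IsPGroup.iff_card (p := p) (G := Γ)).mp hΓ
  rw [Nat.card_eq_fintype_card] at hn
  apply le_antisymm
  · intro x hx
    obtain ⟨y, hy, z, hz, hxyz⟩ := ker_le_aux p Γ hbal n x hx
    have hcard : ((p : ℤ) ^ n) • z ∈ LinearMap.range (barD3 Γ) := by
      have := card_smul_mem_range_barD3 hz
      rw [hn] at this
      simpa using this
    rw [hxyz]
    exact Submodule.add_mem _ hy hcard
  · exact range_barD3_le_ker_barD2
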